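/- Let (X, μ) be a measure space, 1 ≤ p < ∞, and let f ∈ L^p(μ) with real nonnegative values. Then for every j ∈ ℕ there exists λ ∈ [2^(2^j), 2^(2^(j+1))] such that μ({x : f(x) > λ}) ≤ C · 2^(−j) · λ^(−p) · ‖f‖_{L^p}^p, where C is an absolute constant (e.g. C = 1/log 2). -/

import Mathlib

open MeasureTheory Real

/-- Level-set selection lemma: for nonnegative `f ∈ L^p(μ)` and every `j`, there is
`λ ∈ [2^(2^j), 2^(2^(j+1))]` with `μ({f > λ}) ≤ (1/log 2) 2^{-j} λ^{-p} ‖f‖_p^p`. -/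
theorem stmt_5 {X : Type*} [MeasurableSpace X] (μ : Measure X)
    (p : ℝ) (hp : 1 ≤ p) (f : X → ℝ) (hf0 : ∀ x, 0 ≤ f x)
    (hfm : Measurable f) (hfp : Integrable (fun x => f x ^ p) μ) (j : ℕ) :
    ∃ lam ∈ Set.Icc ((2 : ℝ) ^ (2 ^ j)) ((2 : ℝ) ^ (2 ^ (j + 1))),
      μ {x | lam < f x} ≤
        ENNReal.ofReal ((1 / Real.log 2) * (2 : ℝ) ^ (-(j : ℝ)) * lam ^ (-p) *
          ∫ x, f x ^ p ∂μ) := by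
  by_contra hcon
  push_neg at hcon
  set a : ℝ := (2 : ℝ) ^ (2 ^ j) with ha
  set b : ℝ := (2 : ℝ) ^ (2 ^ (j + 1)) with hb
  have ha2 : (2 : ℝ) ≤ a := by
    calc (2:ℝ) = 2 ^ 1 := (pow_one 2).symm
    _ ≤ a := pow_le_pow_right₀ one_le_two (Nat.one_le_two_pow)
  have ha0 : (0 : ℝ) < a := lt_of_lt_of_le two_pos ha2
  have habs : a < b := by
    apply pow_lt_pow_right₀ one_lt_two
    exact Nat.pow_lt_pow_right one_lt_two (Nat.lt_succ_self j)
  have hab : a ≤ b := habs.le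
  set I : ℝ := ∫ x, f x ^ p ∂μ with hI
  have hI0 : 0 ≤ I := integral_nonneg fun x => Real.rpow_nonneg (hf0 x) p
  set C : ℝ := 1 / Real.log 2 * (2 : ℝ) ^ (-(j : ℝ)) with hC
  have hlog2 : (0 : ℝ) < Real.log 2 := Real.log_pos one_lt_two
  have hC0 : 0 < C := by positivity
  have hp0 : (0 : ℝ) < p := lt_of_lt_of_le one_pos hp
  -- key hypothesis: for λ ∈ [a,b], ofReal (C * λ^(-p) * I) < μ {λ < f}
  have hkey : ∀ t ∈ Set.Icc a b,
      ENNReal.ofReal (C * t ^ (-p) * I) < μ {x | t < f x} := by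
    intro t ht
    exact hcon t ht
  -- layer cake
  have layer : ENNReal.ofReal I =
      ENNReal.ofReal p * ∫⁻ t in Set.Ioi (0:ℝ),
        μ {x | t < f x} * ENNReal.ofReal (t ^ (p - 1)) := by
    rw [hI, ofReal_integral_eq_lintegral_ofReal hfp
      (Filter.Eventually.of_forall fun x => Real.rpow_nonneg (hf0 x) p)]
    exact MeasureTheory.lintegral_rpow_eq_lintegral_meas_lt_mul μ
      (Filter.Eventually.of_forall hf0) hfm.aemeasurable hp0
  -- the exact value of the lower integral
  have hinv_intble : IntegrableOn (fun t : ℝ => C * I * t⁻¹) (Set.Ioc a b) := by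
    apply Integrable.const_mul
    have : IntervalIntegrable (fun t : ℝ => t⁻¹) volume a b := by
      apply intervalIntegral.intervalIntegrable_inv (f := fun x : ℝ => x)
      · intro x hx
        rw [Set.uIcc_of_le hab] at hx
        exact (lt_of_lt_of_le ha0 hx.1).ne'
      · exact continuousOn_id
    exact (intervalIntegrable_iff_integrableOn_Ioc_of_le hab).mp this
  have hval : ∫⁻ t in Set.Ioc a b, ENNReal.ofReal (C * I * t⁻¹) = ENNReal.ofReal I := by
    rw [← ofReal_integral_eq_lintegral_ofReal hinv_intble]
    · congr 1
      rw [MeasureTheory.integral_const_mul]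
      have h1 : ∫ t in Set.Ioc a b, t⁻¹ = Real.log b - Real.log a := by
        rw [← intervalIntegral.integral_of_le hab]
        rw [integral_inv]
        · rw [Real.log_div (ne_of_gt (lt_of_lt_of_le ha0 hab)) (ne_of_gt ha0)]
        · intro h
          rw [Set.uIcc_of_le hab] at h
          exact absurd h.1 (by linarith)
      rw [h1]
      have hlogb : Real.log b = (2 ^ (j+1) : ℕ) * Real.log 2 := by
        rw [hb, Real.log_pow]
      have hloga : Real.log a = (2 ^ j : ℕ) * Real.log 2 := by
        rw [ha, Real.log_pow]
      rw [hlogb, hloga, hC]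
      have h2 : ((2:ℝ) ^ (-(j:ℝ))) = ((2:ℝ) ^ (j:ℕ))⁻¹ := by
        rw [Real.rpow_neg (by norm_num), Real.rpow_natCast]
      rw [h2]
      push_cast
      have h3 : (2:ℝ) ^ (j + 1) * Real.log 2 - 2 ^ j * Real.log 2
          = 2 ^ j * Real.log 2 := by ring
      rw [h3]
      field_simp
    · filter_upwards [self_mem_ae_restrict (measurableSet_Ioc :
        MeasurableSet (Set.Ioc a b))] with t ht
      have : 0 < t := lt_of_lt_of_le ha0 ht.1.le
      positivity
  -- strict comparison on Ioc a b
  have hmeas : Measurable fun t : ℝ => μ {x | t < f x} * ENNReal.ofReal (t ^ (p - 1)) := by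
    apply Measurable.mul
    · apply Antitone.measurable
      intro s t hst
      exact measure_mono fun x hx => lt_of_le_of_lt hst hx
    · exact (Real.continuous_rpow_const (by linarith : (0:ℝ) ≤ p - 1)).measurable.ennreal_ofReal
  have hstrict : ∫⁻ t in Set.Ioc a b, ENNReal.ofReal (C * I * t⁻¹)
      < ∫⁻ t in Set.Ioc a b, μ {x | t < f x} * ENNReal.ofReal (t ^ (p - 1)) := by
    apply setLIntegral_strict_mono measurableSet_Ioc
    · rw [Real.volume_Ioc]
      simp only [ne_eq, ENNReal.ofReal_eq_zero, not_le]
      linarith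
    · exact hmeas
    · rw [hval]; exact ENNReal.ofReal_ne_top
    · apply Filter.Eventually.of_forall
      intro t ht
      have ht0 : 0 < t := lt_of_lt_of_le ha0 ht.1.le
      have htp : 0 < t ^ (p - 1) := Real.rpow_pos_of_pos ht0 _
      have h1 := hkey t ⟨ht.1.le, ht.2⟩
      have h2 : ENNReal.ofReal (C * t ^ (-p) * I) * ENNReal.ofReal (t ^ (p - 1))
          < μ {x | t < f x} * ENNReal.ofReal (t ^ (p - 1)) := by
        exact ENNReal.mul_lt_mul_left (by simp [htp.le, htp]) ENNReal.ofReal_ne_top h1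
      refine lt_of_le_of_lt (le_of_eq ?_) h2
      rw [← ENNReal.ofReal_mul (by positivity)]
      congr 1
      have : t ^ (-p) * t ^ (p - 1) = t⁻¹ := by
        rw [← Real.rpow_add ht0, show -p + (p - 1) = (-1 : ℝ) by ring, Real.rpow_neg_one]
      calc C * I * t⁻¹ = C * I * (t ^ (-p) * t ^ (p - 1)) := by rw [this]
      _ = C * t ^ (-p) * I * t ^ (p - 1) := by ring
  -- assemble contradiction
  have hsub : ∫⁻ t in Set.Ioc a b, μ {x | t < f x} * ENNReal.ofReal (t ^ (p - 1))
      ≤ ∫⁻ t in Set.Ioi (0:ℝ), μ {x | t < f x} * ENNReal.ofReal (t ^ (p - 1)) :=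
    lintegral_mono_set fun t ht => lt_of_lt_of_le ha0 ht.1.le
  have hfinal : ENNReal.ofReal I < ENNReal.ofReal I := by
    calc ENNReal.ofReal I = ∫⁻ t in Set.Ioc a b, ENNReal.ofReal (C * I * t⁻¹) := hval.symm
    _ < ∫⁻ t in Set.Ioc a b, μ {x | t < f x} * ENNReal.ofReal (t ^ (p - 1)) := hstrict
    _ ≤ ∫⁻ t in Set.Ioi (0:ℝ), μ {x | t < f x} * ENNReal.ofReal (t ^ (p - 1)) := hsub
    _ ≤ ENNReal.ofReal p * ∫⁻ t in Set.Ioi (0:ℝ),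
          μ {x | t < f x} * ENNReal.ofReal (t ^ (p - 1)) := by
        nth_rewrite 1 [← one_mul (∫⁻ t in Set.Ioi (0:ℝ), _)]
        exact mul_le_mul_left (ENNReal.one_le_ofReal.mpr hp) _
    _ = ENNReal.ofReal I := layer.symm
  exact lt_irrefl _ hfinal
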